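/- Let γ = 1/(1+e^{-βE}) with β, E > 0, and let p_0 ∈ [0,1]. Define p^{(d)} = \frac{γ}{1-γ}(1-p_0) - \frac{γ-p_0}{1-γ} I_d(1-γ), where I_d(x) = \frac{(1-x)^d}{d} \sum_{j=0}^{d-1}(d-j)\binom{d-1+j}{j}x^j. Then \lim_{d→∞} p^{(d)} = 1 - p_0 e^{-βE}, i.e., the memory-assisted protocol converges to the β-swap output. -/

import Mathlib

open Filter Finset

lemma choose_le_two_pow' (n k : ℕ) : n.choose k ≤ 2 ^ n := by
  rcases le_or_gt k n with h | h
  · calc n.choose k ≤ ∑ i ∈ Finset.range (n+1), n.choose i :=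
        Finset.single_le_sum (fun _ _ => Nat.zero_le _) (Finset.mem_range.2 (by omega))
      _ = 2 ^ n := Nat.sum_range_choose n
  · simp [Nat.choose_eq_zero_of_lt h]

lemma keyA (x : ℝ) (hx0 : 0 < x) (hx1 : x < 1/2) (c : ℕ) :
    Tendsto (fun d : ℕ => (1-x)^d * ∑ j ∈ Finset.range (d - c),
      ((d-1+j).choose j : ℝ) * x^j) atTop (nhds 1) := by
  have h2x : 2 * x < 1 := by linarith
  have hx1' : x < 1 := by linarith
  have h1x : 0 < 1 - x := by linarith
  have hr0 : 0 ≤ 4 * x * (1 - x) := by positivity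
  have hr1 : 4 * x * (1 - x) < 1 := by nlinarith [sq_nonneg (1 - 2*x)]
  set K : ℝ := 1 / (2^(c+1) * x^c * (1 - 2*x)) with hK
  have h12 : (0:ℝ) < 1 - 2*x := by linarith
  have hKpos : 0 < K := by
    apply div_pos one_pos
    exact mul_pos (by positivity) h12
  have key : ∀ d : ℕ, c + 1 ≤ d →
      1 - K * (4*x*(1-x))^d ≤ (1-x)^d * ∑ j ∈ Finset.range (d - c),
        ((d-1+j).choose j : ℝ) * x^j ∧
      (1-x)^d * ∑ j ∈ Finset.range (d - c), ((d-1+j).choose j : ℝ) * x^j ≤ 1 := by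
    intro d hd
    have hxnorm : ‖x‖ < 1 := by rw [Real.norm_eq_abs, abs_of_pos hx0]; exact hx1'
    have hgeo := hasSum_choose_mul_geometric_of_norm_lt_one (𝕜 := ℝ) (d-1) hxnorm
    have hchoose : ∀ j : ℕ, ((j + (d-1)).choose (d-1) : ℝ) = ((d-1+j).choose j : ℝ) := by
      intro j
      norm_cast
      rw [Nat.add_comm j (d-1)]
      exact Nat.choose_symm_add
    have hgeo' : HasSum (fun j : ℕ => ((d-1+j).choose j : ℝ) * x^j)
        (1 / (1-x)^d) := by
      have hd1 : d - 1 + 1 = d := by omega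
      have h' : HasSum (fun j : ℕ => ((d-1+j).choose j : ℝ) * x^j) (1 / (1-x)^(d-1+1)) :=
        hgeo.congr_fun fun j => by rw [hchoose]
      rwa [hd1] at h'
    have hsummable := hgeo'.summable
    have htsum : ∑' j, ((d-1+j).choose j : ℝ) * x^j = 1 / (1-x)^d := hgeo'.tsum_eq
    have hsplit := (Summable.sum_add_tsum_nat_add (d - c) hsummable).symm
    -- tail bound
    have htail0 : 0 ≤ ∑' j, ((d-1+(j+(d-c))).choose (j+(d-c)) : ℝ) * x^(j+(d-c)) :=
      tsum_nonneg fun j => by positivity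
    have hgs : Summable (fun j : ℕ => (2:ℝ)^(d-1+(d-c)) * x^(d-c) * (2*x)^j) := by
      apply Summable.mul_left
      exact summable_geometric_of_lt_one (by positivity) h2x
    have htailK : ∑' j, ((d-1+(j+(d-c))).choose (j+(d-c)) : ℝ) * x^(j+(d-c))
        ≤ (2:ℝ)^(d-1+(d-c)) * x^(d-c) / (1 - 2*x) := by
      have hle : ∀ j : ℕ, ((d-1+(j+(d-c))).choose (j+(d-c)) : ℝ) * x^(j+(d-c))
          ≤ (2:ℝ)^(d-1+(d-c)) * x^(d-c) * (2*x)^j := by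
        intro j
        have h1 : ((d-1+(j+(d-c))).choose (j+(d-c)) : ℝ) ≤ (2:ℝ)^(d-1+(j+(d-c))) := by
          calc ((d-1+(j+(d-c))).choose (j+(d-c)) : ℝ) ≤ ((2^(d-1+(j+(d-c))) : ℕ) : ℝ) := by
                exact_mod_cast choose_le_two_pow' _ _
            _ = (2:ℝ)^(d-1+(j+(d-c))) := by push_cast; ring
        calc ((d-1+(j+(d-c))).choose (j+(d-c)) : ℝ) * x^(j+(d-c))
            ≤ (2:ℝ)^(d-1+(j+(d-c))) * x^(j+(d-c)) := by
              apply mul_le_mul_of_nonneg_right h1 (by positivity)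
          _ = (2:ℝ)^(d-1+(d-c)) * x^(d-c) * (2*x)^j := by
              rw [show d-1+(j+(d-c)) = d-1+(d-c)+j by omega,
                show j+(d-c) = (d-c)+j by omega, pow_add, pow_add, mul_pow]
              ring
      calc ∑' j, ((d-1+(j+(d-c))).choose (j+(d-c)) : ℝ) * x^(j+(d-c))
          ≤ ∑' j, (2:ℝ)^(d-1+(d-c)) * x^(d-c) * (2*x)^j :=
            Summable.tsum_le_tsum hle (hsummable.comp_injective (add_left_injective (d-c))) hgs
        _ = (2:ℝ)^(d-1+(d-c)) * x^(d-c) * (1 / (1 - 2*x)) := by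
            rw [tsum_mul_left, tsum_geometric_of_lt_one (by positivity) h2x]
            ring
        _ = (2:ℝ)^(d-1+(d-c)) * x^(d-c) / (1 - 2*x) := by ring
    have hP : (1-x)^d * ∑ j ∈ Finset.range (d - c), ((d-1+j).choose j : ℝ) * x^j
        = 1 - (1-x)^d * ∑' j, ((d-1+(j+(d-c))).choose (j+(d-c)) : ℝ) * x^(j+(d-c)) := by
      have : ∑ j ∈ Finset.range (d - c), ((d-1+j).choose j : ℝ) * x^j
          = 1 / (1-x)^d - ∑' j, ((d-1+(j+(d-c))).choose (j+(d-c)) : ℝ) * x^(j+(d-c)) := by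
        rw [← htsum, hsplit]; ring
      rw [this]
      field_simp
    constructor
    · rw [hP]
      have hB : (1-x)^d * ∑' j, ((d-1+(j+(d-c))).choose (j+(d-c)) : ℝ) * x^(j+(d-c))
          ≤ K * (4*x*(1-x))^d := by
        calc (1-x)^d * ∑' j, ((d-1+(j+(d-c))).choose (j+(d-c)) : ℝ) * x^(j+(d-c))
            ≤ (1-x)^d * ((2:ℝ)^(d-1+(d-c)) * x^(d-c) / (1 - 2*x)) := by
              apply mul_le_mul_of_nonneg_left htailK (by positivity)
          _ = K * (4*x*(1-x))^d := by
              rw [hK]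
              have e1 : d - 1 + (d - c) = d + d - (c + 1) := by omega
              have e2 : (2:ℝ)^(d-1+(d-c)) * (2:ℝ)^(c+1) = (2:ℝ)^(d+d) := by
                rw [← pow_add]; congr 1; omega
              have e3 : x^(d-c) * x^c = x^d := by rw [← pow_add]; congr 1; omega
              have h4 : (4*x*(1-x))^d = (2:ℝ)^(d+d) * x^d * (1-x)^d := by
                rw [show (4:ℝ)*x*(1-x) = 2*2*x*(1-x) by ring, show d + d = 2*d by ring,
                  pow_mul]
                rw [mul_pow, mul_pow, mul_pow, ← pow_mul]
                ring_nf
              have hc2 : ((2:ℝ))^(c+1) ≠ 0 := by positivity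
              have hxc : x^c ≠ 0 := by positivity
              have h12' : (1:ℝ) - 2*x ≠ 0 := ne_of_gt h12
              rw [h4]
              rw [← e2, ← e3]
              field_simp
      linarith
    · rw [hP]
      nlinarith [mul_nonneg (le_of_lt (pow_pos h1x d)) htail0]
  have hlow : Tendsto (fun d : ℕ => 1 - K * (4*x*(1-x))^d) atTop (nhds 1) := by
    have := (tendsto_pow_atTop_nhds_zero_of_lt_one hr0 hr1).const_mul K
    have h2 := this.const_sub 1
    simpa using h2
  apply tendsto_of_tendsto_of_tendsto_of_le_of_le' hlow tendsto_const_nhds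
  · filter_upwards [eventually_atTop.2 ⟨c+1, fun d hd => hd⟩] with d hd
    exact (key d hd).1
  · filter_upwards [eventually_atTop.2 ⟨c+1, fun d hd => hd⟩] with d hd
    exact (key d hd).2

theorem stmt_12 (β E : ℝ) (hβ : 0 < β) (hE : 0 < E) (p₀ : ℝ) (hp₀ : p₀ ∈ Set.Icc (0:ℝ) 1)
    (γ : ℝ) (hγ : γ = 1 / (1 + Real.exp (-β * E))) :
    Filter.Tendsto
      (fun d : ℕ =>
        γ / (1 - γ) * (1 - p₀) -
          (γ - p₀) / (1 - γ) *
            ((1 - (1 - γ)) ^ d / (d : ℝ) *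
              ∑ j ∈ Finset.range d,
                ((d - j : ℕ) : ℝ) * ((d - 1 + j).choose j : ℝ) * (1 - γ) ^ j))
      Filter.atTop (nhds (1 - p₀ * Real.exp (-β * E))) := by
  set t := Real.exp (-β * E) with ht_def
  have ht0 : 0 < t := Real.exp_pos _
  have ht1 : t < 1 := by
    rw [ht_def, Real.exp_lt_one_iff]
    nlinarith
  have h1t : (0:ℝ) < 1 + t := by linarith
  have hγpos : 0 < γ := by rw [hγ]; positivity
  have hγhalf : 1/2 < γ := by
    rw [hγ, lt_div_iff₀ h1t]; linarith
  have hγ1 : γ < 1 := by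
    rw [hγ, div_lt_one h1t]; linarith
  set x : ℝ := 1 - γ with hx_def
  have hx0 : 0 < x := by simp [hx_def]; linarith
  have hx1 : x < 1/2 := by rw [hx_def]; linarith
  have h1x : (1:ℝ) - x = γ := by rw [hx_def]; ring
  have hγne : γ ≠ 0 := ne_of_gt hγpos
  have hxne : x ≠ 0 := ne_of_gt hx0
  -- limit of A
  have hA : Tendsto (fun d : ℕ => γ^d * ∑ j ∈ Finset.range d,
      ((d-1+j).choose j : ℝ) * x^j) atTop (nhds 1) := by
    have := keyA x hx0 hx1 0
    simpa [h1x] using this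
  -- limit of B
  have hB : Tendsto (fun d : ℕ => x * γ^d * ∑ k ∈ Finset.range (d-1),
      ((d+k).choose k : ℝ) * x^k) atTop (nhds (x/γ)) := by
    have hg := (keyA x hx0 hx1 2).comp (tendsto_add_atTop_nat 1)
    have hg' : Tendsto (fun d : ℕ => (1-x)^(d+1) * ∑ k ∈ Finset.range (d-1),
        ((d+k).choose k : ℝ) * x^k) atTop (nhds 1) := by
      apply hg.congr
      intro d
      simp only [Function.comp]
      rw [show d+1-2 = d-1 from by omega]
      congr 1
    have := hg'.const_mul (x/(1-x))
    rw [mul_one] at this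
    rw [h1x] at this
    apply this.congr
    intro d
    rw [pow_succ]
    field_simp
  -- limit of the I term
  have hI : Tendsto (fun d : ℕ => γ ^ d / (d : ℝ) *
      ∑ j ∈ Finset.range d,
        ((d - j : ℕ) : ℝ) * ((d - 1 + j).choose j : ℝ) * x ^ j)
      atTop (nhds (1 - x/γ)) := by
    apply Filter.Tendsto.congr' _ (hA.sub hB)
    filter_upwards [eventually_atTop.2 ⟨1, fun d hd => hd⟩] with d hd
    have hdR : ((d:ℝ)) ≠ 0 := by positivity
    have hsum : ∑ j ∈ Finset.range d,
        ((d - j : ℕ) : ℝ) * ((d - 1 + j).choose j : ℝ) * x ^ j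
        = (d:ℝ) * (∑ j ∈ Finset.range d, ((d-1+j).choose j : ℝ) * x^j)
          - (d:ℝ) * x * (∑ k ∈ Finset.range (d-1), ((d+k).choose k : ℝ) * x^k) := by
      have hT : ∑ j ∈ Finset.range d, (j:ℝ) * ((d-1+j).choose j : ℝ) * x ^ j
          = (d:ℝ) * x * (∑ k ∈ Finset.range (d-1), ((d+k).choose k : ℝ) * x^k) := by
        have hpeel := Finset.sum_range_succ'
          (fun j => (j:ℝ) * ((d-1+j).choose j : ℝ) * x ^ j) (d-1)
        rw [show d-1+1 = d from by omega] at hpeel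
        rw [hpeel]
        simp only [Nat.cast_zero, zero_mul, pow_zero, add_zero]
        rw [Finset.mul_sum]
        apply Finset.sum_congr rfl
        intro k _
        rw [show d-1+(k+1) = d+k from by omega]
        have e2 : ((d+k).choose (k+1) : ℝ) * ((k:ℝ)+1) = ((d+k).choose k : ℝ) * d := by
          have h := Nat.choose_succ_right_eq (d+k) k
          rw [show d+k-k = d from by omega] at h
          exact_mod_cast h
        push_cast
        rw [pow_succ]
        linear_combination (x * x^k) * e2
      have hcast : ∀ j ∈ Finset.range d, ((d - j : ℕ) : ℝ) * ((d-1+j).choose j : ℝ) * x ^ j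
          = (d:ℝ) * (((d-1+j).choose j : ℝ) * x^j)
            - (j:ℝ) * ((d-1+j).choose j : ℝ) * x ^ j := by
        intro j hj
        have hjd : j ≤ d := le_of_lt (Finset.mem_range.1 hj)
        rw [Nat.cast_sub hjd]
        ring
      rw [Finset.sum_congr rfl hcast, Finset.sum_sub_distrib, hT]
      simp [Finset.mul_sum]
    rw [hsum]
    field_simp
  have hfinal := (hI.const_mul ((γ - p₀)/(1-γ))).const_sub (γ/(1-γ)*(1-p₀))
  have hval : γ/(1-γ)*(1-p₀) - (γ-p₀)/(1-γ) * (1 - x/γ) = 1 - p₀ * t := by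
    have htγ : t = (1-γ)/γ := by
      field_simp
      rw [hγ]
      field_simp
      ring
    rw [htγ, hx_def]
    have h1γ : (1:ℝ) - γ ≠ 0 := by intro h; rw [hx_def] at hxne; exact hxne h
    field_simp
    ring
  rw [← hval]
  apply hfinal.congr
  intro d
  simp only [h1x.symm]
  rw [hx_def]
  ring_nf
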